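/- (Key kernel identity for Proposition 1.) Let n ≥ 1, ν₀ ∈ ℝ, and s_1,…,s_n > 0 with S = diag(s_1²,…,s_n²). Let t = (t_{ij})_{1 ≤ j ≤ i ≤ n} with all t_{ii} > 0, let T be the unit lower triangular matrix with below-diagonal entries t_{ij}, T̃ = diag(t_{11},…,t_{nn}), and W = Tᵀ T̃ T. Then (Π_{i=1}^{n} t_{ii}^{(ν₀+i-n)/2 − 1} e^{−(s_i²/2) t_{ii}}) · (Π_{i=2}^{n} t_{ii}^{(i-1)/2} e^{−(1/2) Σ_{j=1}^{i-1} t_{ij}² t_{ii} s_j²}) = det(W)^{(ν₀−n−1)/2} e^{−(1/2) tr(S W)} · Π_{i=1}^{n} t_{ii}^{i-1}. -/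
import Mathlib


open Matrix Finset Real

/-- key kernel identity for Proposition 1. With 1-based index
`i` in the paper corresponding to the 0-based `i : Fin n` here (so `i` in the
paper is `(i : ℕ) + 1` and the exponent `i - 1` is `(i : ℕ)`):
`(∏ i t_{ii}^{(ν₀+i-n)/2-1} e^{-(s_i²/2)t_{ii}}) ·
 (∏ i t_{ii}^{(i-1)/2} e^{-(1/2)∑_{j<i} t_{ij}² t_{ii} s_j²})
 = det(W)^{(ν₀-n-1)/2} e^{-(1/2)tr(SW)} ∏ i t_{ii}^{i-1}`.
(The second product in the paper starts at `i = 2`; the omitted `i = 1`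
factor equals `1`, so the product over all `i` agrees with it.) -/
theorem kernel_identity_for_wishart
    (n : ℕ) (hn : 1 ≤ n) (ν₀ : ℝ) (s d : Fin n → ℝ)
    (hs : ∀ i, 0 < s i) (hd : ∀ i, 0 < d i)
    (T : Matrix (Fin n) (Fin n) ℝ)
    (hTdiag : ∀ i, T i i = 1)
    (hTupper : ∀ i j : Fin n, i < j → T i j = 0) :
    (∏ i : Fin n,
        d i ^ ((ν₀ + ((i : ℝ) + 1) - n) / 2 - 1) * Real.exp (-((s i) ^ 2 / 2) * d i))
      * (∏ i : Fin n,
        d i ^ ((i : ℝ) / 2)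
          * Real.exp (-(1 / 2) *
              ∑ j ∈ Finset.univ.filter (fun j : Fin n => j < i),
                (T i j) ^ 2 * d i * (s j) ^ 2))
      = (Tᵀ * Matrix.diagonal d * T).det ^ ((ν₀ - n - 1) / 2)
          * Real.exp (-(1 / 2) *
              (Matrix.diagonal (fun i => (s i) ^ 2) * (Tᵀ * Matrix.diagonal d * T)).trace)
          * ∏ i : Fin n, d i ^ (i : ℕ) := by
  -- determinant of T
  have hTdet : T.det = 1 := by
    have h : Tᵀ.BlockTriangular id := by
      intro i j hij
      exact hTupper j i hij
    have := Matrix.det_of_upperTriangular h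
    rw [Matrix.det_transpose] at this
    simpa [hTdiag] using this
  have hdet : (Tᵀ * Matrix.diagonal d * T).det = ∏ i, d i := by
    rw [Matrix.det_mul, Matrix.det_mul, Matrix.det_transpose, hTdet,
      Matrix.det_diagonal]
    ring
  -- trace computation
  have hWdiag : ∀ i, (Tᵀ * Matrix.diagonal d * T) i i = ∑ k, s i ^ 0 * d k * T k i ^ 2 := by
    intro i
    simp [Matrix.mul_apply, Matrix.diagonal, Finset.sum_mul]
    apply Finset.sum_congr rfl
    intro k _
    ring
  have htr : (Matrix.diagonal (fun i => (s i) ^ 2) * (Tᵀ * Matrix.diagonal d * T)).trace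
      = ∑ i, s i ^ 2 * d i
        + ∑ i, ∑ j ∈ Finset.univ.filter (fun j : Fin n => j < i),
            (T i j) ^ 2 * d i * (s j) ^ 2 := by
    have h1 : (Matrix.diagonal (fun i => (s i) ^ 2) * (Tᵀ * Matrix.diagonal d * T)).trace
        = ∑ i, ∑ k, s i ^ 2 * d k * T k i ^ 2 := by
      simp only [Matrix.trace, Matrix.diag, Matrix.mul_apply, Matrix.diagonal_apply,
        Matrix.transpose_apply, ite_mul, zero_mul, mul_ite, mul_zero,
        Finset.sum_ite_eq, Finset.sum_ite_eq', Finset.mem_univ, if_true]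
      apply Finset.sum_congr rfl
      intro i _
      rw [Finset.mul_sum]
      apply Finset.sum_congr rfl
      intro k _
      ring
    rw [h1, Finset.sum_comm]
    rw [← Finset.sum_add_distrib]
    apply Finset.sum_congr rfl
    intro k _
    rw [← Finset.sum_filter_add_sum_filter_not Finset.univ (fun i => i < k)]
    rw [add_comm]
    congr 1
    · rw [Finset.sum_eq_single k
        (fun i hi hik => by
          have hki : k < i := lt_of_le_of_ne
            (not_lt.mp (by simpa using (Finset.mem_filter.mp hi).2)) (Ne.symm hik)
          simp [hTupper k i hki])
        (fun h => absurd (Finset.mem_filter.mpr ⟨Finset.mem_univ k, by simp⟩) h),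
        hTdiag]
      ring
    · apply Finset.sum_congr rfl
      intro j _
      ring
  rw [hdet, htr]
  rw [mul_add, Real.exp_add]
  rw [show (-(1/2 : ℝ)) * ∑ i, s i ^ 2 * d i = ∑ i, -((s i)^2/2) * d i by
        rw [Finset.mul_sum]; apply Finset.sum_congr rfl; intro i _; ring,
      Real.exp_sum]
  rw [show (-(1/2 : ℝ)) * ∑ i, ∑ j ∈ Finset.univ.filter (fun j : Fin n => j < i),
        (T i j) ^ 2 * d i * (s j) ^ 2
      = ∑ i, -(1/2 : ℝ) * ∑ j ∈ Finset.univ.filter (fun j : Fin n => j < i),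
        (T i j) ^ 2 * d i * (s j) ^ 2 by rw [Finset.mul_sum], Real.exp_sum]
  rw [← Real.finset_prod_rpow _ _ (fun i _ => (hd i).le)]
  rw [← Finset.prod_mul_distrib, ← Finset.prod_mul_distrib, ← Finset.prod_mul_distrib,
    ← Finset.prod_mul_distrib]
  apply Finset.prod_congr rfl
  intro i _
  have hpow : d i ^ ((ν₀ + ((i : ℝ) + 1) - n) / 2 - 1) * d i ^ ((i : ℝ) / 2)
      = d i ^ ((ν₀ - n - 1) / 2) * d i ^ (i : ℕ) := by
    rw [← Real.rpow_natCast (d i) i, ← Real.rpow_add (hd i), ← Real.rpow_add (hd i)]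
    congr 1
    ring
  calc d i ^ ((ν₀ + ((i : ℝ) + 1) - n) / 2 - 1) * Real.exp (-((s i) ^ 2 / 2) * d i) *
        (d i ^ ((i : ℝ) / 2) * Real.exp (-(1 / 2) *
          ∑ j ∈ Finset.univ.filter (fun j : Fin n => j < i),
            (T i j) ^ 2 * d i * (s j) ^ 2))
      = (d i ^ ((ν₀ + ((i : ℝ) + 1) - n) / 2 - 1) * d i ^ ((i : ℝ) / 2)) *
        (Real.exp (-((s i) ^ 2 / 2) * d i) * Real.exp (-(1 / 2) *
          ∑ j ∈ Finset.univ.filter (fun j : Fin n => j < i),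
            (T i j) ^ 2 * d i * (s j) ^ 2)) := by ring
    _ = _ := by rw [hpow]; ring
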